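/- There exists a constant C > 0 such that for every m ≥ 3 and every multi-index β = (β₁, β₂, m-1-β₁-β₂) ∈ ℕ₀³, one has ∑_{s=0}^{⌊β₁/2⌋} ∑_{t=0}^{⌊β₂/2⌋} (β₁+β₂-2s-2t choose β₁-2s) · (s+t choose s) ≤ C · m · (β₁+β₂ choose β₁). -/
import Mathlib

open Finset

private lemma pascal2 (M c : ℕ) : M.choose (c+2) + M.choose c ≤ (M+2).choose (c+2) := by
  have h1 : (M+2).choose (c+2) = (M+1).choose (c+1) + (M+1).choose (c+2) :=
    Nat.choose_succ_succ _ _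
  have h2 : (M+1).choose (c+2) = M.choose (c+1) + M.choose (c+2) := Nat.choose_succ_succ _ _
  have h3 : (M+1).choose (c+1) = M.choose c + M.choose (c+1) := Nat.choose_succ_succ _ _
  omega

private lemma keyL : ∀ k b1 b2 : ℕ,
    (∑ s ∈ range (k+1), if 2*s ≤ b1 ∧ 2*(k-s) ≤ b2 then
      (b1+b2-2*k).choose (b1-2*s) * k.choose s else 0) ≤ (b1+b2).choose b1 := by
  intro k
  induction k with
  | zero => intro b1 b2; simp
  | succ k ih =>
    intro b1 b2
    have hsplit : (∑ s ∈ range (k+2), if 2*s ≤ b1 ∧ 2*(k+1-s) ≤ b2 then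
          (b1+b2-2*(k+1)).choose (b1-2*s) * (k+1).choose s else 0)
        = (∑ s ∈ range (k+2), if 2*s ≤ b1 ∧ 2*(k+1-s) ≤ b2 then
            (b1+b2-2*(k+1)).choose (b1-2*s) * k.choose s else 0)
          + (∑ s ∈ range (k+2), if 2*s ≤ b1 ∧ 2*(k+1-s) ≤ b2 then
            (b1+b2-2*(k+1)).choose (b1-2*s) * (if s = 0 then 0 else k.choose (s-1)) else 0) := by
      rw [← Finset.sum_add_distrib]
      refine Finset.sum_congr rfl (fun s _ => ?_)
      by_cases h : 2*s ≤ b1 ∧ 2*(k+1-s) ≤ b2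
      · simp only [if_pos h]
        rcases s with _ | s
        · simp
        · simp only [Nat.succ_sub_one, if_neg (Nat.succ_ne_zero s)]
          rw [Nat.choose_succ_succ']
          ring
      · simp [h]
    have hAfin : (∑ s ∈ range (k+2), if 2*s ≤ b1 ∧ 2*(k+1-s) ≤ b2 then
          (b1+b2-2*(k+1)).choose (b1-2*s) * k.choose s else 0) ≤ (b1+b2-2).choose b1 := by
      have hdrop : (∑ s ∈ range (k+2), if 2*s ≤ b1 ∧ 2*(k+1-s) ≤ b2 then
            (b1+b2-2*(k+1)).choose (b1-2*s) * k.choose s else 0)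
          = ∑ s ∈ range (k+1), if 2*s ≤ b1 ∧ 2*(k+1-s) ≤ b2 then
            (b1+b2-2*(k+1)).choose (b1-2*s) * k.choose s else 0 := by
        rw [Finset.sum_range_succ, Nat.choose_succ_self, Nat.mul_zero]
        simp
      rw [hdrop]
      by_cases hb2 : 2 ≤ b2
      · refine le_trans (Finset.sum_le_sum (fun s hs => ?_))
          (le_trans (ih b1 (b2-2)) (le_of_eq (by rw [show b1+(b2-2) = b1+b2-2 from by omega])))
        have hsk : s ≤ k := Nat.lt_succ_iff.mp (Finset.mem_range.mp hs)
        by_cases h : 2*s ≤ b1 ∧ 2*(k+1-s) ≤ b2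
        · have h' : 2*s ≤ b1 ∧ 2*(k-s) ≤ b2-2 := by omega
          have e1 : b1+b2-2*(k+1) = b1+(b2-2)-2*k := by omega
          rw [if_pos h, if_pos h', e1]
        · simp only [if_neg h]
          exact Nat.zero_le _
      · refine le_of_eq ?_ |>.trans (Nat.zero_le _) |>.trans (le_refl _)
        refine Finset.sum_eq_zero (fun s hs => ?_)
        have hsk : s ≤ k := Nat.lt_succ_iff.mp (Finset.mem_range.mp hs)
        have hcond : ¬ (2*s ≤ b1 ∧ 2*(k+1-s) ≤ b2) := by omega
        simp [hcond]
    have hB0 : (∑ s ∈ range (k+2), if 2*s ≤ b1 ∧ 2*(k+1-s) ≤ b2 then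
          (b1+b2-2*(k+1)).choose (b1-2*s) * (if s = 0 then 0 else k.choose (s-1)) else 0)
        = ∑ s ∈ range (k+1), if 2*(s+1) ≤ b1 ∧ 2*(k-s) ≤ b2 then
          (b1+b2-2*(k+1)).choose (b1-2*(s+1)) * k.choose s else 0 := by
      rw [Finset.sum_range_succ']
      have e : ∀ s : ℕ, k+1-(s+1) = k-s := fun s => by omega
      simp [e]
    rw [hsplit, hB0]
    by_cases hb1 : 2 ≤ b1
    · have hBpos : (∑ s ∈ range (k+1), if 2*(s+1) ≤ b1 ∧ 2*(k-s) ≤ b2 then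
            (b1+b2-2*(k+1)).choose (b1-2*(s+1)) * k.choose s else 0)
          ≤ (b1+b2-2).choose (b1-2) := by
        refine le_trans (Finset.sum_le_sum (fun s hs => ?_))
          (le_trans (ih (b1-2) b2) (le_of_eq (by rw [show b1-2+b2 = b1+b2-2 from by omega])))
        by_cases h : 2*(s+1) ≤ b1 ∧ 2*(k-s) ≤ b2
        · have h' : 2*s ≤ b1-2 ∧ 2*(k-s) ≤ b2 := by omega
          have e1 : b1+b2-2*(k+1) = b1-2+b2-2*k := by omega
          have e2 : b1-2*(s+1) = b1-2-2*s := by omega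
          rw [if_pos h, if_pos h', e1, e2]
        · simp only [if_neg h]
          exact Nat.zero_le _
      have hp := pascal2 (b1+b2-2) (b1-2)
      have e1 : b1-2+2 = b1 := by omega
      have e2 : b1+b2-2+2 = b1+b2 := by omega
      rw [e1, e2] at hp
      omega
    · have hBzero : (∑ s ∈ range (k+1), if 2*(s+1) ≤ b1 ∧ 2*(k-s) ≤ b2 then
            (b1+b2-2*(k+1)).choose (b1-2*(s+1)) * k.choose s else 0) = 0 := by
        refine Finset.sum_eq_zero (fun s hs => ?_)
        have hcond : ¬ (2*(s+1) ≤ b1 ∧ 2*(k-s) ≤ b2) := by omega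
        simp [hcond]
      have hmono : (b1+b2-2).choose b1 ≤ (b1+b2).choose b1 :=
        Nat.choose_le_choose b1 (by omega)
      omega

private def Gfun (b1 b2 : ℕ) (q : ℕ × ℕ) : ℕ :=
  if q.2 ≤ q.1 ∧ 2*q.2 ≤ b1 ∧ 2*(q.1-q.2) ≤ b2 then
    (b1+b2-2*q.1).choose (b1-2*q.2) * q.1.choose q.2 else 0

private lemma mainNat (b1 b2 : ℕ) :
    (∑ s ∈ range (b1/2+1), ∑ t ∈ range (b2/2+1),
        (b1+b2-2*s-2*t).choose (b1-2*s) * (s+t).choose s)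
      ≤ (b1/2 + b2/2 + 1) * (b1+b2).choose b1 := by
  have hinj : ∀ x ∈ range (b1/2+1) ×ˢ range (b2/2+1), ∀ y ∈ range (b1/2+1) ×ˢ range (b2/2+1),
      (fun p : ℕ × ℕ => (p.1+p.2, p.1)) x = (fun p : ℕ × ℕ => (p.1+p.2, p.1)) y → x = y := by
    intro x _ y _ h
    simp only [Prod.mk.injEq] at h
    exact Prod.ext h.2 (by omega)
  have step1 : (∑ s ∈ range (b1/2+1), ∑ t ∈ range (b2/2+1),
        (b1+b2-2*s-2*t).choose (b1-2*s) * (s+t).choose s)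
      = ∑ q ∈ (range (b1/2+1) ×ˢ range (b2/2+1)).image (fun p : ℕ × ℕ => (p.1+p.2, p.1)),
          Gfun b1 b2 q := by
    rw [Finset.sum_image hinj, Finset.sum_product]
    refine Finset.sum_congr rfl (fun s hs => Finset.sum_congr rfl (fun t ht => ?_))
    have hs' : s ≤ b1/2 := Nat.lt_succ_iff.mp (Finset.mem_range.mp hs)
    have ht' : t ≤ b2/2 := Nat.lt_succ_iff.mp (Finset.mem_range.mp ht)
    have hc : t ≤ s+t ∧ 2*s ≤ b1 ∧ 2*(s+t-s) ≤ b2 := by omega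
    simp only [Gfun]
    have hc' : s ≤ s+t ∧ 2*s ≤ b1 ∧ 2*((s+t)-s) ≤ b2 := by omega
    rw [if_pos hc']
    have e1 : b1+b2-2*(s+t) = b1+b2-2*s-2*t := by omega
    rw [e1]
  have hsub : (range (b1/2+1) ×ˢ range (b2/2+1)).image (fun p : ℕ × ℕ => (p.1+p.2, p.1))
      ⊆ range (b1/2 + b2/2 + 1) ×ˢ range (b1/2 + b2/2 + 1) := by
    intro q hq
    simp only [Finset.mem_image, Finset.mem_product, Finset.mem_range] at hq ⊢
    obtain ⟨p, ⟨hp1, hp2⟩, rfl⟩ := hq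
    omega
  have step3 : ∀ k ∈ range (b1/2 + b2/2 + 1),
      (∑ s ∈ range (b1/2 + b2/2 + 1), Gfun b1 b2 (k, s)) ≤ (b1+b2).choose b1 := by
    intro k hk
    have hkK : k + 1 ≤ b1/2 + b2/2 + 1 := Finset.mem_range.mp hk
    have e : (∑ s ∈ range (b1/2 + b2/2 + 1), Gfun b1 b2 (k, s))
        = ∑ s ∈ range (k+1), Gfun b1 b2 (k, s) := by
      refine (Finset.sum_subset (Finset.range_subset_range.mpr hkK) (fun s _ hs => ?_)).symm
      have hns : ¬ s ≤ k := by simpa [Nat.lt_succ_iff] using hs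
      simp [Gfun, hns]
    rw [e]
    refine le_trans (le_of_eq ?_) (keyL k b1 b2)
    refine Finset.sum_congr rfl (fun s hs => ?_)
    have hsk : s ≤ k := Nat.lt_succ_iff.mp (Finset.mem_range.mp hs)
    simp only [Gfun]
    by_cases h : 2*s ≤ b1 ∧ 2*(k-s) ≤ b2
    · rw [if_pos ⟨hsk, h⟩, if_pos h]
    · rw [if_neg (by tauto), if_neg h]
  calc (∑ s ∈ range (b1/2+1), ∑ t ∈ range (b2/2+1),
          (b1+b2-2*s-2*t).choose (b1-2*s) * (s+t).choose s)
      = ∑ q ∈ (range (b1/2+1) ×ˢ range (b2/2+1)).image (fun p : ℕ × ℕ => (p.1+p.2, p.1)),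
          Gfun b1 b2 q := step1
    _ ≤ ∑ q ∈ range (b1/2 + b2/2 + 1) ×ˢ range (b1/2 + b2/2 + 1), Gfun b1 b2 q :=
        Finset.sum_le_sum_of_subset hsub
    _ = ∑ k ∈ range (b1/2 + b2/2 + 1), ∑ s ∈ range (b1/2 + b2/2 + 1), Gfun b1 b2 (k, s) := by
        rw [Finset.sum_product]
    _ ≤ ∑ _k ∈ range (b1/2 + b2/2 + 1), (b1+b2).choose b1 := Finset.sum_le_sum step3
    _ = (b1/2 + b2/2 + 1) * (b1+b2).choose b1 := by
        rw [Finset.sum_const, Finset.card_range, smul_eq_mul]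

theorem stmt4 : ∃ C : ℝ, 0 < C ∧ ∀ m β₁ β₂ : ℕ, 3 ≤ m → β₁ + β₂ + 1 ≤ m →
    (∑ s ∈ range (β₁ / 2 + 1), ∑ t ∈ range (β₂ / 2 + 1),
        ((β₁ + β₂ - 2 * s - 2 * t).choose (β₁ - 2 * s) * (s + t).choose s : ℝ)) ≤
      C * m * ((β₁ + β₂).choose β₁ : ℝ) := by
  refine ⟨1, one_pos, fun m β₁ β₂ hm hβ => ?_⟩
  have hnat : (∑ s ∈ range (β₁/2+1), ∑ t ∈ range (β₂/2+1),
        (β₁+β₂-2*s-2*t).choose (β₁-2*s) * (s+t).choose s)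
      ≤ m * (β₁+β₂).choose β₁ := by
    refine le_trans (mainNat β₁ β₂) (Nat.mul_le_mul_right _ ?_)
    omega
  have hcast := (Nat.cast_le (α := ℝ)).mpr hnat
  push_cast at hcast
  calc (∑ s ∈ range (β₁ / 2 + 1), ∑ t ∈ range (β₂ / 2 + 1),
        ((β₁ + β₂ - 2 * s - 2 * t).choose (β₁ - 2 * s) * (s + t).choose s : ℝ))
      ≤ (m : ℝ) * ((β₁ + β₂).choose β₁ : ℝ) := hcast
    _ = 1 * m * ((β₁ + β₂).choose β₁ : ℝ) := by ring
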